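/- If a random non-forced choice model ρ on X satisfies axioms A2 and A3, then there exists a strictly positive function u : X → ℝ such that for every menu A and every a ∈ A, ρ(a,A) = (1 − ρ(o,A)) · u(a)/(∑_{b∈A} u(b)); moreover, one may take u(a) = ρ(a,X)/ρ(z,X) for any fixed z ∈ X. -/

import Mathlib

open Finset

variable {X : Type*} [Fintype X] [DecidableEq X]

/-- The probability of choosing the outside option (deferring) at menu `A`. -/
noncomputable def defer (ρ : Finset X → X → ℝ) (A : Finset X) : ℝ :=
  1 - ∑ a ∈ A, ρ A a

/-- `ρ` is a random non-forced choice model on `X`. -/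
def IsRNFC (ρ : Finset X → X → ℝ) : Prop :=
  ∀ A : Finset X, A.Nonempty →
    (∀ a ∈ A, 0 ≤ ρ A a ∧ ρ A a ≤ 1) ∧
    (∀ a, a ∉ A → ρ A a = 0) ∧
    (∑ a ∈ A, ρ A a) ≤ 1

/-- `ρ` is a decision-conflict logit with representation `(u, D)`. -/
def IsDCL (ρ : Finset X → X → ℝ) (u : X → ℝ) (D : Finset X → ℝ) : Prop :=
  (∀ a, 0 < u a) ∧
  (∀ A : Finset X, A.Nonempty → 0 ≤ D A ∧ (D A = 0 ↔ A.card = 1)) ∧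
  (∀ A : Finset X, A.Nonempty → ∀ a ∈ A, ρ A a = u a / ((∑ b ∈ A, u b) + D A))

/-- Axiom A2 (Positivity). -/
def A2 (ρ : Finset X → X → ℝ) : Prop :=
  ∀ A : Finset X, 2 ≤ A.card → (∀ a ∈ A, 0 < ρ A a) ∧ 0 < defer ρ A

/-- Axiom A3 (The Active-Choice Luce Axiom). -/
def A3 (ρ : Finset X → X → ℝ) : Prop :=
  ∀ A B : Finset X, A.Nonempty → B.Nonempty →
    ∀ a ∈ A ∩ B, ∀ b ∈ A ∩ B, ρ A a * ρ B b = ρ B a * ρ A b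

/-- Under A2 and A3, `ρ` admits the conditional-Luce form, and one may take
`u(a) = ρ(a,X)/ρ(z,X)` for any fixed `z ∈ X`. -/
theorem stmt2 (hX : 1 < Fintype.card X) (ρ : Finset X → X → ℝ)
    (hρ : IsRNFC ρ) (h2 : A2 ρ) (h3 : A3 ρ) :
    (∃ u : X → ℝ, (∀ a, 0 < u a) ∧
      ∀ A : Finset X, A.Nonempty → ∀ a ∈ A,
        ρ A a = (1 - defer ρ A) * (u a / ∑ b ∈ A, u b)) ∧
    ∀ z : X,
      (∀ a : X, 0 < ρ univ a / ρ univ z) ∧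
      (∀ A : Finset X, A.Nonempty → ∀ a ∈ A,
        ρ A a = (1 - defer ρ A) * ((ρ univ a / ρ univ z) / ∑ b ∈ A, ρ univ b / ρ univ z)) := by
  have hcard : 2 ≤ (univ : Finset X).card := by rw [Finset.card_univ]; omega
  have hpos : ∀ a : X, 0 < ρ univ a := fun a => (h2 univ hcard).1 a (mem_univ a)
  have huniv : (univ : Finset X).Nonempty := Finset.card_pos.mp (by omega)
  -- key representation
  have key : ∀ A : Finset X, A.Nonempty → ∀ a ∈ A,
      ρ A a = (1 - defer ρ A) * (ρ univ a / ∑ b ∈ A, ρ univ b) := by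
    intro A hA a ha
    have hS : 0 < ∑ b ∈ A, ρ univ b :=
      Finset.sum_pos (fun b _ => hpos b) hA
    have hkey : ρ A a * ∑ b ∈ A, ρ univ b = (∑ b ∈ A, ρ A b) * ρ univ a := by
      rw [Finset.mul_sum, Finset.sum_mul]
      refine Finset.sum_congr rfl fun b hb => ?_
      have h := h3 A univ hA huniv a (by simp [ha]) b (by simp [hb])
      linarith [h]
    have hdef : 1 - defer ρ A = ∑ b ∈ A, ρ A b := by simp [defer]
    rw [hdef]
    field_simp
    linarith [hkey]
  constructor
  · exact ⟨fun a => ρ univ a, hpos, key⟩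
  · intro z
    have hz := hpos z
    refine ⟨fun a => div_pos (hpos a) hz, fun A hA a ha => ?_⟩
    have : (ρ univ a / ρ univ z) / ∑ b ∈ A, ρ univ b / ρ univ z
        = ρ univ a / ∑ b ∈ A, ρ univ b := by
      rw [← Finset.sum_div]
      field_simp
    rw [this]
    exact key A hA a ha
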